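/- The projection Φ₃,₂ : BS(3,2) → ℝ² maps the element h = b a b⁻¹ a² b a⁻¹ b⁻¹ a⁻² to (0,0); consequently Φ₃,₂ is not injective. -/

import Mathlib

inductive Letter : Type
  | a | b | ainv | binv
deriving DecidableEq

def bExp (w : List Letter) : ℤ := (w.count Letter.b : ℤ) - (w.count Letter.binv : ℤ)

def binvExp (w : List Letter) : ℤ := (w.count Letter.binv : ℤ) - (w.count Letter.b : ℤ)

noncomputable def psiAux (m n : ℕ) : List Letter → ℝ
  | [] => 0
  | x :: w =>
    match x with
    | Letter.a    => psiAux m n w + ((m : ℝ) / n) ^ (bExp w.reverse)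
    | Letter.ainv => psiAux m n w - ((m : ℝ) / n) ^ (bExp w.reverse)
    | _           => psiAux m n w

noncomputable def psi (m n : ℕ) (w : List Letter) : ℝ := psiAux m n w.reverse

inductive Gen : Type
  | a | b
deriving DecidableEq

/-- The Baumslag–Solitar group BS(m,n) = ⟨a, b | aᵐ b = b aⁿ⟩. -/
abbrev BS (m n : ℕ) : Type :=
  PresentedGroup
    ({FreeGroup.of Gen.a ^ m * FreeGroup.of Gen.b * (FreeGroup.of Gen.a ^ n)⁻¹ *
        (FreeGroup.of Gen.b)⁻¹} : Set (FreeGroup Gen))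

def Letter.toBS (m n : ℕ) : Letter → BS m n
  | Letter.a    => PresentedGroup.of Gen.a
  | Letter.b    => PresentedGroup.of Gen.b
  | Letter.ainv => (PresentedGroup.of Gen.a)⁻¹
  | Letter.binv => (PresentedGroup.of Gen.b)⁻¹

def wordToBS (m n : ℕ) (w : List Letter) : BS m n := (w.map (Letter.toBS m n)).prod

/-- The word ω = b a b⁻¹ a² b a⁻¹ b⁻¹ a⁻². -/
def omegaWord : List Letter :=
  [Letter.b, Letter.a, Letter.binv, Letter.a, Letter.a, Letter.b,
   Letter.ainv, Letter.binv, Letter.ainv, Letter.ainv]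


section AuxHNN

open Multiplicative Subgroup HNNExtension

abbrev Mz := Multiplicative ℤ

lemma mem_zpowers_iff_dvd (n : ℤ) (a : Mz) :
    a ∈ zpowers (ofAdd n) ↔ n ∣ a.toAdd := by
  rw [Subgroup.mem_zpowers_iff]
  constructor
  · rintro ⟨k, rfl⟩
    exact ⟨k, by rw [toAdd_zpow, toAdd_ofAdd, smul_eq_mul]; ring⟩
  · rintro ⟨k, hk⟩
    exact ⟨k, by apply toAdd.injective; rw [toAdd_zpow, hk, toAdd_ofAdd, smul_eq_mul]; ring⟩

def phi23 : (zpowers (ofAdd (2:ℤ)) : Subgroup Mz) ≃* (zpowers (ofAdd (3:ℤ)) : Subgroup Mz) where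
  toFun a := ⟨ofAdd (3 * ((a : Mz).toAdd / 2)), by
    rw [mem_zpowers_iff_dvd]; exact ⟨(a : Mz).toAdd / 2, by rw [toAdd_ofAdd]⟩⟩
  invFun b := ⟨ofAdd (2 * ((b : Mz).toAdd / 3)), by
    rw [mem_zpowers_iff_dvd]; exact ⟨(b : Mz).toAdd / 3, by rw [toAdd_ofAdd]⟩⟩
  left_inv a := by
    obtain ⟨x, hx⟩ := a
    obtain ⟨k, hk⟩ := (mem_zpowers_iff_dvd 2 x).1 hx
    ext
    simp only
    simp only [toAdd_ofAdd]
    omega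
  right_inv b := by
    obtain ⟨x, hx⟩ := b
    obtain ⟨k, hk⟩ := (mem_zpowers_iff_dvd 3 x).1 hx
    ext
    simp only
    simp only [toAdd_ofAdd]
    omega
  map_mul' a b := by
    obtain ⟨x, hx⟩ := a
    obtain ⟨y, hy⟩ := b
    obtain ⟨k, hk⟩ := (mem_zpowers_iff_dvd 2 x).1 hx
    obtain ⟨l, hl⟩ := (mem_zpowers_iff_dvd 2 y).1 hy
    ext
    simp only [Subgroup.coe_mul, toAdd_mul, toAdd_ofAdd]
    omega

abbrev HG := HNNExtension Mz (zpowers (ofAdd (2:ℤ))) (zpowers (ofAdd (3:ℤ))) phi23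

def genMap : Gen → HG
  | Gen.a => HNNExtension.of (ofAdd (1:ℤ))
  | Gen.b => HNNExtension.t

lemma of_pow (k : ℤ) :
    (HNNExtension.of (ofAdd (1:ℤ)) : HG) ^ k = HNNExtension.of (ofAdd k) := by
  rw [← map_zpow]
  congr 1
  apply toAdd.injective
  simp [toAdd_zpow]

lemma phi23_apply (x : ℤ) (h : x ∈ zpowers (ofAdd (2:ℤ))) :
    (phi23 ⟨ofAdd x, h⟩ : Mz) = ofAdd (3 * (x / 2)) := rfl

lemma relmap : ∀ r ∈ ({FreeGroup.of Gen.a ^ 3 * FreeGroup.of Gen.b *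
      (FreeGroup.of Gen.a ^ 2)⁻¹ * (FreeGroup.of Gen.b)⁻¹} : Set (FreeGroup Gen)),
    FreeGroup.lift genMap r = 1 := by
  intro r hr
  rw [Set.mem_singleton_iff] at hr
  subst hr
  have hm : ofAdd (-2 : ℤ) ∈ zpowers (ofAdd (2:ℤ)) := by
    rw [mem_zpowers_iff_dvd, toAdd_ofAdd]; decide
  have key := HNNExtension.t_mul_of (φ := phi23) ⟨ofAdd (-2:ℤ), hm⟩
  have hval : (phi23 ⟨ofAdd (-2:ℤ), hm⟩ : Mz) = ofAdd (-3:ℤ) := by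
    rw [phi23_apply]; decide
  rw [hval] at key
  simp only [map_mul, map_inv, map_pow, FreeGroup.lift_apply_of, genMap]
  have h3 : (HNNExtension.of (ofAdd (1:ℤ)) : HG) ^ (3:ℕ) = HNNExtension.of (ofAdd (3:ℤ)) := by
    rw [← zpow_natCast, of_pow]; norm_num
  have h2 : ((HNNExtension.of (ofAdd (1:ℤ)) : HG) ^ (2:ℕ))⁻¹ = HNNExtension.of (ofAdd (-2:ℤ)) := by
    rw [← zpow_natCast, ← zpow_neg, of_pow]; norm_num
  rw [h3, h2, mul_assoc (HNNExtension.of (ofAdd (3:ℤ))), key]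
  rw [← mul_assoc, ← map_mul]
  have : (ofAdd (3:ℤ)) * (ofAdd (-3:ℤ)) = 1 := by decide
  rw [this, map_one, one_mul, mul_inv_cancel]

noncomputable def bsHom : BS 3 2 →* HG := PresentedGroup.toGroup relmap

lemma chain_ok : List.Chain'
    (fun a b : ℤˣ × Mz => a.2 ∈ toSubgroup (zpowers (ofAdd (2:ℤ))) (zpowers (ofAdd (3:ℤ))) a.1 → a.1 = b.1)
    [((1:ℤˣ), ofAdd (1:ℤ)), ((-1:ℤˣ), ofAdd (2:ℤ)), ((1:ℤˣ), ofAdd (-1:ℤ)), ((-1:ℤˣ), ofAdd (-2:ℤ))] := by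
  refine List.isChain_cons_cons.2 ⟨?_, List.isChain_cons_cons.2 ⟨?_, List.isChain_cons_cons.2 ⟨?_, List.isChain_singleton _⟩⟩⟩
  · intro h
    rw [toSubgroup_one, mem_zpowers_iff_dvd, toAdd_ofAdd] at h
    omega
  · intro h
    rw [toSubgroup_neg_one, mem_zpowers_iff_dvd, toAdd_ofAdd] at h
    omega
  · intro h
    rw [toSubgroup_one, mem_zpowers_iff_dvd, toAdd_ofAdd] at h
    omega

noncomputable def redw : HNNExtension.NormalWord.ReducedWord Mz (zpowers (ofAdd (2:ℤ))) (zpowers (ofAdd (3:ℤ))) :=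
  { head := 1
    toList := [((1:ℤˣ), ofAdd (1:ℤ)), ((-1:ℤˣ), ofAdd (2:ℤ)), ((1:ℤˣ), ofAdd (-1:ℤ)), ((-1:ℤˣ), ofAdd (-2:ℤ))]
    chain := chain_ok }

lemma omega_ne_one : wordToBS 3 2 omegaWord ≠ 1 := by
  intro h
  have h1 : bsHom (wordToBS 3 2 omegaWord) = 1 := by rw [h, map_one]
  have h2 : bsHom (wordToBS 3 2 omegaWord) = redw.prod phi23 := by
    simp only [wordToBS, omegaWord, List.map_cons, List.map_nil, List.prod_cons, List.prod_nil,
      map_mul, map_one, mul_one, Letter.toBS, map_inv, PresentedGroup.toGroup.of, bsHom, genMap]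
    simp only [HNNExtension.NormalWord.ReducedWord.prod, redw, List.map_cons, List.map_nil, List.prod_cons,
      List.prod_nil, map_one, one_mul, mul_one]
    have e1 : HNNExtension.t (φ := phi23) ^ (((1:ℤˣ):ℤ)) = HNNExtension.t := by norm_num
    have e2 : HNNExtension.t (φ := phi23) ^ ((((-1:ℤˣ)):ℤ)) = HNNExtension.t⁻¹ := by
      norm_num
    rw [e1, e2]
    have o2 : (HNNExtension.of (ofAdd (2:ℤ)) : HG) =
        HNNExtension.of (ofAdd (1:ℤ)) * HNNExtension.of (ofAdd (1:ℤ)) := by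
      rw [← map_mul]; congr 1
    have om1 : (HNNExtension.of (ofAdd (-1:ℤ)) : HG) = (HNNExtension.of (ofAdd (1:ℤ)))⁻¹ := by
      rw [← map_inv]; congr 1
    have om2 : (HNNExtension.of (ofAdd (-2:ℤ)) : HG) =
        (HNNExtension.of (ofAdd (1:ℤ)))⁻¹ * (HNNExtension.of (ofAdd (1:ℤ)))⁻¹ := by
      rw [← map_inv, ← map_mul]; congr 1
    rw [o2, om1, om2]
    group
  have h3 : redw.prod phi23 ∈ (HNNExtension.of.range :
      Subgroup HG) := by
    rw [← h2, h1]; exact one_mem _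
  have h4 := HNNExtension.ReducedWord.toList_eq_nil_of_mem_of_range phi23 redw h3
  simp [redw] at h4

end AuxHNN

theorem phi_omega_zero_and_not_injective :
    psi 3 2 omegaWord = 0 ∧ binvExp omegaWord = 0 ∧ wordToBS 3 2 omegaWord ≠ 1 ∧
    ∀ Φ : BS 3 2 → ℝ × ℤ,
      (∀ w : List Letter, Φ (wordToBS 3 2 w) = (psi 3 2 w, binvExp w)) →
      ¬ Function.Injective Φ := by
  refine ⟨?_, ?_, omega_ne_one, ?_⟩
  · simp (config := { decide := true }) only [psi, psiAux, omegaWord, bExp, List.count_cons, List.count_nil,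
      List.reverse_cons, List.reverse_nil, List.nil_append, List.cons_append]
    norm_num
  · decide
  · intro Φ hΦ hinj
    have h1 := hΦ omegaWord
    have h2 := hΦ []
    have hz : psi 3 2 [] = 0 := rfl
    have hz2 : binvExp ([] : List Letter) = 0 := rfl
    have hone : wordToBS 3 2 [] = 1 := rfl
    have hpsi : psi 3 2 omegaWord = 0 := by
      simp (config := { decide := true }) only [psi, psiAux, omegaWord, bExp, List.count_cons, List.count_nil,
        List.reverse_cons, List.reverse_nil, List.nil_append, List.cons_append]
      norm_num
    have hb : binvExp omegaWord = 0 := by decide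
    rw [hpsi, hb] at h1
    rw [hz, hz2] at h2
    exact omega_ne_one ((hinj (h1.trans h2.symm)).trans hone)
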